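/- arXiv:1204.2224 — 2 statements merged into one kernel-verified Lean document; each statement's English description precedes it below -/
import Mathlib

section
/- Let F be an integrable subbundle of the tangent bundle TM of a Riemannian manifold (M, g^{TM}), and let ∇^{TM} be the Levi-Civita connection. Suppose the metric satisfies the almost-isometry condition: for all X ∈ Γ(F) and U, V sections of an orthogonal complement subbundle F_i^⊥ of F, one has ⟨[X,U],V⟩ + ⟨U,[X,V]⟩ = X⟨U,V⟩. Then ⟨X, ∇^{TM}_U V + ∇^{TM}_V U⟩ = 0 for all X ∈ Γ(F) and U, V ∈ Γ(F_i^⊥). -/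
/-!
Abstract algebraic model of a Riemannian manifold `(M, g^{TM})` with an
integrable subbundle `F ⊆ TM`: `A` = smooth functions, `V` = vector fields,
`act` = directional derivative, `g` = metric, `nabla` = Levi-Civita connection.
Subbundles are modelled by submodules of the module of vector fields
(their modules of smooth sections).
-/

/-- Abstract model of the functions, vector fields, metric and Levi-Civita
connection of a Riemannian manifold `(M, g)`. -/
structure RiemannianModel (A V : Type*) [CommRing A] [AddCommGroup V]
    [Module A V] [LieRing V] where
  /-- directional derivative of functions along vector fields -/
  act : V → A → A
  act_add : ∀ (X : V) (a b : A), act X (a + b) = act X a + act X b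
  /-- Leibniz rule: each `act X` is a derivation -/
  act_mul : ∀ (X : V) (a b : A), act X (a * b) = act X a * b + a * act X b
  /-- the Riemannian metric -/
  g : V → V → A
  g_symm : ∀ X Y, g X Y = g Y X
  g_add_left : ∀ X Y Z, g (X + Y) Z = g X Z + g Y Z
  g_smul_left : ∀ (a : A) (X Y : V), g (a • X) Y = a * g X Y
  /-- the Levi-Civita connection -/
  nabla : V → V → V
  /-- metric compatibility of the Levi-Civita connection -/
  nabla_compat : ∀ X Y Z, act X (g Y Z) = g (nabla X Y) Z + g Y (nabla X Z)
  /-- the Levi-Civita connection is torsion free -/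
  nabla_torsionFree : ∀ X Y, nabla X Y - nabla Y X = ⁅X, Y⁆

/-- If `F` is an integrable subbundle of `TM`, `F_i^⊥` a subbundle orthogonal
to `F`, and the almost-isometry condition
`⟨[X,U],V⟩ + ⟨U,[X,V]⟩ = X⟨U,V⟩` holds for `X ∈ Γ(F)`, `U, V ∈ Γ(F_i^⊥)`,
then `⟨X, ∇^{TM}_U V + ∇^{TM}_V U⟩ = 0` for all such `X, U, V`. -/
theorem almost_isometry_nabla_symm_orthogonal {A V : Type*} [CommRing A]
    [AddCommGroup V] [Module A V] [LieRing V] (D : RiemannianModel A V)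
    (F Fi : Submodule A V)
    -- `F` is integrable
    (hInt : ∀ X ∈ F, ∀ Y ∈ F, ⁅X, Y⁆ ∈ F)
    -- `Fi` is orthogonal to `F`
    (hOrtho : ∀ X ∈ F, ∀ U ∈ Fi, D.g X U = 0)
    -- infinitesimal almost-isometry condition
    (hAI : ∀ X ∈ F, ∀ U ∈ Fi, ∀ W ∈ Fi,
      D.g ⁅X, U⁆ W + D.g U ⁅X, W⁆ = D.act X (D.g U W)) :
    ∀ X ∈ F, ∀ U ∈ Fi, ∀ W ∈ Fi,
      D.g X (D.nabla U W + D.nabla W U) = 0 := by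
  intro X hX U hU W hW
  have act0 : ∀ Y : V, D.act Y 0 = 0 := by
    intro Y
    have h := D.act_add Y 0 0
    rw [add_zero] at h
    linear_combination -h
  have gneg : ∀ Y Z : V, D.g (-Y) Z = -D.g Y Z := by
    intro Y Z
    have h := D.g_smul_left (-1 : A) Y Z
    rw [neg_one_smul] at h
    linear_combination h
  have hXW : D.g X W = 0 := hOrtho X hX W hW
  have hXU : D.g X U = 0 := hOrtho X hX U hU
  have e1 := D.nabla_compat U X W
  rw [hXW, act0] at e1
  have e2 := D.nabla_compat W X U
  rw [hXU, act0] at e2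
  have e3 := D.nabla_compat X U W
  have tU := D.nabla_torsionFree X U
  have tW := D.nabla_torsionFree X W
  have hU2 : D.nabla U X = D.nabla X U + -⁅X, U⁆ := by rw [← tU]; abel
  have hW2 : D.nabla W X = D.nabla X W + -⁅X, W⁆ := by rw [← tW]; abel
  have sU : D.g (D.nabla U X) W = D.g (D.nabla X U) W + -D.g ⁅X, U⁆ W := by
    rw [hU2, D.g_add_left, gneg]
  have sW : D.g (D.nabla W X) U = D.g (D.nabla X W) U + -D.g ⁅X, W⁆ U := by
    rw [hW2, D.g_add_left, gneg]
  have hai := hAI X hX U hU W hW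
  have s1 := D.g_symm X (D.nabla U W)
  have s2 := D.g_symm X (D.nabla W U)
  have s3 := D.g_symm (D.nabla X W) U
  have s4 := D.g_symm ⁅X, W⁆ U
  rw [D.g_symm, D.g_add_left]
  linear_combination -s1 - s2 - e1 - e2 - sU - sW - s3 + e3 + s4 + hai
end

section
/- Under the almost-isometry conditions with F and F_2^⊥ both integrable, for U_2, V_2 ∈ Γ(F_2^⊥) and X ∈ Γ(F): ⟨∇^{TM,β,ε}_{U_2}V_2, X⟩ = (1/2)⟨[U_2,V_2], X⟩ = 0 for all β, ε > 0. -/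
/-- The rescaled metric
`g_{β,ε} = β² g^F ⊕ ε^{-2} g^{F_1^⊥} ⊕ g^{F_2^⊥}`,
where `pF, p1, p2` are the orthogonal projections onto the three summands of
the orthogonal splitting `TM = F ⊕ F_1^⊥ ⊕ F_2^⊥`. -/
noncomputable def rescaledMetric {A V : Type*} [CommRing A] [Algebra ℝ A] [AddCommGroup V]
    [Module A V] [LieRing V] (D : RiemannianModel A V)
    (pF p1 p2 : V →ₗ[A] V) (β ε : ℝ) : V → V → A := fun X Y =>
  (β ^ 2) • D.g (pF X) (pF Y) + (ε ^ 2)⁻¹ • D.g (p1 X) (p1 Y)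
    + D.g (p2 X) (p2 Y)

theorem rescaled_connection_F2_pairing_vanishes {A V : Type*}
    [CommRing A] [Algebra ℝ A] [AddCommGroup V] [Module A V] [LieRing V]
    (D : RiemannianModel A V)
    (F F1 F2 : Submodule A V) (pF p1 p2 : V →ₗ[A] V)
    -- `pF, p1, p2` are the projections of the splitting `V = F ⊕ F1 ⊕ F2`
    (hsplit : ∀ v : V, pF v + p1 v + p2 v = v)
    (hpF_mem : ∀ v, pF v ∈ F) (hp1_mem : ∀ v, p1 v ∈ F1) (hp2_mem : ∀ v, p2 v ∈ F2)
    (hpF_id : ∀ v ∈ F, pF v = v) (hp1_id : ∀ v ∈ F1, p1 v = v) (hp2_id : ∀ v ∈ F2, p2 v = v)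
    (hp1_F : ∀ v ∈ F, p1 v = 0) (hp1_F2 : ∀ v ∈ F2, p1 v = 0)
    (hp2_F : ∀ v ∈ F, p2 v = 0) (hp2_F1 : ∀ v ∈ F1, p2 v = 0)
    -- the splitting is orthogonal
    (hOrtho1 : ∀ X ∈ F, ∀ U ∈ F1, D.g X U = 0)
    (hOrtho2 : ∀ X ∈ F, ∀ U ∈ F2, D.g X U = 0)
    (hOrtho12 : ∀ U ∈ F1, ∀ W ∈ F2, D.g U W = 0)
    -- `F` is integrable
    (hIntF : ∀ X ∈ F, ∀ Y ∈ F, ⁅X, Y⁆ ∈ F)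
    -- `F_2^⊥` is integrable (Condition (C))
    (hIntF2 : ∀ U ∈ F2, ∀ W ∈ F2, ⁅U, W⁆ ∈ F2)
    -- almost-isometry conditions
    (hAI1 : ∀ X ∈ F, ∀ U ∈ F1, ∀ W ∈ F1,
      D.g ⁅X, U⁆ W + D.g U ⁅X, W⁆ = D.act X (D.g U W))
    (hAI2 : ∀ X ∈ F, ∀ U ∈ F2, ∀ W ∈ F2,
      D.g ⁅X, U⁆ W + D.g U ⁅X, W⁆ = D.act X (D.g U W))
    (hAI3 : ∀ X ∈ F, ∀ U1 ∈ F1, ∀ U2 ∈ F2, D.g ⁅X, U2⁆ U1 = 0)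
    -- the scaling parameters
    (β ε : ℝ) (hβ : 0 < β) (hε : 0 < ε)
    -- the Levi-Civita connection `∇^{TM,β,ε}` of the rescaled metric
    (nablaBE : V → V → V)
    (hcompat : ∀ X Y Z : V,
      D.act X (rescaledMetric D pF p1 p2 β ε Y Z)
        = rescaledMetric D pF p1 p2 β ε (nablaBE X Y) Z
          + rescaledMetric D pF p1 p2 β ε Y (nablaBE X Z))
    (htorsion : ∀ X Y : V, nablaBE X Y - nablaBE Y X = ⁅X, Y⁆) :
    ∀ U2 ∈ F2, ∀ V2 ∈ F2, ∀ X ∈ F,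
      2 * D.g (nablaBE U2 V2) X = D.g ⁅U2, V2⁆ X ∧
      D.g (nablaBE U2 V2) X = 0 := by

  intro U2 hU2 V2 hV2 X hX
  -- basic facts about the metric
  have hg0l : ∀ Y : V, D.g 0 Y = 0 := by
    intro Y
    have h := D.g_smul_left 0 Y Y
    simpa using h
  have hg0r : ∀ Y : V, D.g Y 0 = 0 := fun Y => by rw [D.g_symm]; exact hg0l Y
  have hgnegl : ∀ (W Y : V), D.g (-W) Y = - D.g W Y := by
    intro W Y
    have h := D.g_smul_left (-1) W Y
    simpa using h
  have hgsubl : ∀ (W Y Z : V), D.g (W - Y) Z = D.g W Z - D.g Y Z := by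
    intro W Y Z
    rw [sub_eq_add_neg, D.g_add_left, hgnegl, sub_eq_add_neg]
  have hact0 : ∀ W : V, D.act W 0 = 0 := by
    intro W
    have h := D.act_add W 0 0
    simpa using h
  have hpF_F2 : ∀ v ∈ F2, pF v = 0 := by
    intro v hv
    have h := hsplit v
    rw [hp1_F2 v hv, hp2_id v hv] at h
    have h' : pF v + v = v := by simpa using h
    exact add_eq_right.mp h'
  -- the rescaled metric paired with vectors in F
  have hGF : ∀ (W Y : V), Y ∈ F →
      rescaledMetric D pF p1 p2 β ε W Y = (β ^ 2) • D.g W Y := by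
    intro W Y hY
    simp only [rescaledMetric]
    rw [hpF_id Y hY, hp1_F Y hY, hp2_F Y hY, hg0r, hg0r]
    have hkey : D.g (pF W) Y = D.g W Y := by
      conv_rhs => rw [← hsplit W]
      rw [D.g_add_left, D.g_add_left, D.g_symm (p1 W) Y,
        hOrtho1 Y hY (p1 W) (hp1_mem W), D.g_symm (p2 W) Y,
        hOrtho2 Y hY (p2 W) (hp2_mem W)]
      ring
    rw [hkey]
    simp
  -- the rescaled metric paired with vectors in F2
  have hGF2 : ∀ (W Z : V), Z ∈ F2 →
      rescaledMetric D pF p1 p2 β ε W Z = D.g W Z := by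
    intro W Z hZ
    simp only [rescaledMetric]
    rw [hpF_F2 Z hZ, hp1_F2 Z hZ, hp2_id Z hZ, hg0r, hg0r]
    have hkey : D.g (p2 W) Z = D.g W Z := by
      conv_rhs => rw [← hsplit W]
      rw [D.g_add_left, D.g_add_left, hOrtho2 (pF W) (hpF_mem W) Z hZ,
        hOrtho12 (p1 W) (hp1_mem W) Z hZ]
      ring
    rw [hkey]
    simp
  have hGsymm : ∀ W Y : V, rescaledMetric D pF p1 p2 β ε W Y
      = rescaledMetric D pF p1 p2 β ε Y W := by
    intro W Y
    simp only [rescaledMetric]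
    rw [D.g_symm (pF W), D.g_symm (p1 W), D.g_symm (p2 W)]
  -- vanishing pairings
  have zero12 : D.g ⁅U2, V2⁆ X = 0 := by
    rw [D.g_symm]; exact hOrtho2 X hX _ (hIntF2 U2 hU2 V2 hV2)
  have gV2X : D.g V2 X = 0 := by rw [D.g_symm]; exact hOrtho2 X hX V2 hV2
  have gU2X : D.g U2 X = 0 := by rw [D.g_symm]; exact hOrtho2 X hX U2 hU2
  -- compatibility equations
  have e1 : (0 : A) = (β ^ 2) • D.g (nablaBE U2 V2) X + D.g (nablaBE U2 X) V2 := by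
    have h := hcompat U2 V2 X
    rw [hGF V2 X hX, gV2X, smul_zero, hact0, hGF (nablaBE U2 V2) X hX,
      hGsymm V2 (nablaBE U2 X), hGF2 (nablaBE U2 X) V2 hV2] at h
    exact h
  have e2 : (0 : A) = (β ^ 2) • D.g (nablaBE V2 U2) X + D.g (nablaBE V2 X) U2 := by
    have h := hcompat V2 U2 X
    rw [hGF U2 X hX, gU2X, smul_zero, hact0, hGF (nablaBE V2 U2) X hX,
      hGsymm U2 (nablaBE V2 X), hGF2 (nablaBE V2 X) U2 hU2] at h
    exact h
  have e3 : D.act X (D.g U2 V2) = D.g (nablaBE X U2) V2 + D.g (nablaBE X V2) U2 := by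
    have h := hcompat X U2 V2
    rw [hGF2 U2 V2 hV2, hGF2 (nablaBE X U2) V2 hV2,
      hGsymm U2 (nablaBE X V2), hGF2 (nablaBE X V2) U2 hU2] at h
    exact h
  -- torsion-freeness equations
  have t1 : D.g (nablaBE U2 V2) X - D.g (nablaBE V2 U2) X = 0 := by
    rw [← hgsubl, htorsion, zero12]
  have t2 : D.g (nablaBE U2 X) V2 - D.g (nablaBE X U2) V2 = D.g ⁅U2, X⁆ V2 := by
    rw [← hgsubl, htorsion]
  have t3 : D.g (nablaBE V2 X) U2 - D.g (nablaBE X V2) U2 = D.g ⁅V2, X⁆ U2 := by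
    rw [← hgsubl, htorsion]
  -- bracket antisymmetry
  have cgen : ∀ (W Y Z : V), D.g ⁅W, Y⁆ Z = - D.g ⁅Y, W⁆ Z := by
    intro W Y Z
    rw [← htorsion W Y, ← htorsion Y W, hgsubl, hgsubl]
    ring
  have c2 : D.g ⁅U2, X⁆ V2 = - D.g ⁅X, U2⁆ V2 := cgen _ _ _
  have c3 : D.g ⁅V2, X⁆ U2 = - D.g U2 ⁅X, V2⁆ := by
    rw [cgen V2 X U2, D.g_symm U2]
  have ai := hAI2 X hX U2 hU2 V2 hV2
  -- convert scalar multiplication to ring multiplication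
  have hsm : ∀ x : A, (β ^ 2) • x = algebraMap ℝ A (β ^ 2) * x := fun x =>
    Algebra.smul_def _ _
  rw [hsm] at e1 e2
  set b : A := algebraMap ℝ A (β ^ 2) with hbdef
  have key : b * D.g (nablaBE U2 V2) X + b * D.g (nablaBE U2 V2) X = 0 := by
    linear_combination -e1 - e2 + b * t1 - t2 - t3 + e3 - c2 - c3 + ai
  have hb : algebraMap ℝ A (β ^ 2)⁻¹ * b = 1 := by
    rw [hbdef, ← map_mul, inv_mul_cancel₀ (by positivity), map_one]
  have hAA : D.g (nablaBE U2 V2) X + D.g (nablaBE U2 V2) X = 0 := by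
    have h2 : algebraMap ℝ A (β ^ 2)⁻¹ * (b * D.g (nablaBE U2 V2) X
        + b * D.g (nablaBE U2 V2) X) = algebraMap ℝ A (β ^ 2)⁻¹ * 0 := by rw [key]
    rw [mul_zero, mul_add, ← mul_assoc, hb, one_mul] at h2
    exact h2
  have hzero : D.g (nablaBE U2 V2) X = 0 := by
    have h3 : ((1 : ℝ) / 2) • (D.g (nablaBE U2 V2) X + D.g (nablaBE U2 V2) X)
        = ((1 : ℝ) / 2) • (0 : A) := by rw [hAA]
    rw [smul_add, smul_zero, ← add_smul] at h3
    norm_num at h3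
    exact h3
  exact ⟨by rw [hzero, zero12]; ring, hzero⟩
end
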